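/- Let n ≥ 2. If f ∈ T_n has finite order m, then there exists a nonnegative integer l such that m divides l(n−1)+1. -/

import Mathlib

noncomputable section

namespace ThompsonPaper

/-- The circle `ℝ/ℤ`. -/
abbrev Circle : Type := AddCircle (1 : ℝ)

/-- Homeomorphisms of a topological space form a group under composition,
with `(f * g) x = f (g x)`. -/
instance homeoGroup {α : Type*} [TopologicalSpace α] : Group (α ≃ₜ α) where
  mul f g := g.trans f
  one := Homeomorph.refl α
  inv := Homeomorph.symm
  mul_assoc _ _ _ := Homeomorph.ext fun _ => rfl
  one_mul _ := Homeomorph.ext fun _ => rfl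
  mul_one _ := Homeomorph.ext fun _ => rfl
  inv_mul_cancel f := Homeomorph.ext fun x => f.symm_apply_apply x

/-- `x` is an `n`-adic rational: `x = a / n ^ k` with `a` an integer, `k` a natural number. -/
def IsNAdic (n : ℕ) (x : ℝ) : Prop := ∃ a : ℤ, ∃ k : ℕ, x = (a : ℝ) / (n : ℝ) ^ k

/-- The set of `n`-adic points of the circle. -/
def nAdicPoints (n : ℕ) : Set Circle := { p | ∃ x : ℝ, IsNAdic n x ∧ p = (x : Circle) }

/-- `F : ℝ → ℝ` is a lift of the circle map `f`. -/
def IsLift (f : Circle ≃ₜ Circle) (F : ℝ → ℝ) : Prop :=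
  ∀ x : ℝ, f (x : Circle) = ((F x : ℝ) : Circle)

/-- `F : ℝ → ℝ` commutes with translation by `1` and is piecewise affine with finitely
many breakpoints (modulo `1`), all breakpoints at `n`-adic rationals, and with the slope
of every affine piece an integer power of `n`. -/
def PiecewiseNAffine (n : ℕ) (F : ℝ → ℝ) : Prop :=
  (∀ x : ℝ, F (x + 1) = F x + 1) ∧
  ∃ m : ℕ, ∃ t : ℕ → ℝ, ∃ slope : ℕ → ℤ, ∃ c : ℕ → ℝ,
    0 < m ∧ t 0 = 0 ∧ t m = 1 ∧
    (∀ i, i < m → t i < t (i + 1)) ∧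
    (∀ i, i ≤ m → IsNAdic n (t i)) ∧
    (∀ i, i < m → ∀ x ∈ Set.Icc (t i) (t (i + 1)),
      F x = (n : ℝ) ^ (slope i) * x + c i)

/-- Membership in Thompson's group `T_n`: an orientation-preserving homeomorphism of the
circle `ℝ/ℤ` mapping the set of `n`-adic points onto itself, which is piecewise affine
with finitely many breakpoints, all breakpoints at `n`-adic points, and all slopes integer
powers of `n`.  (Orientation preservation and the piecewise affine structure are expressed
through a strictly increasing lift.) -/
def InT (n : ℕ) (f : Circle ≃ₜ Circle) : Prop :=
  f '' nAdicPoints n = nAdicPoints n ∧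
  ∃ F : ℝ → ℝ, StrictMono F ∧ IsLift f F ∧ PiecewiseNAffine n F

/-- Thompson's group `T_n`, as a set of circle homeomorphisms. -/
def TnSet (n : ℕ) : Set (Circle ≃ₜ Circle) := { f | InT n f }

lemma natCast_sub_one_eq_one (n : ℕ) (hn : 2 ≤ n) : (n : ZMod (n-1)) = 1 := by
  have h : n = (n - 1) + 1 := by omega
  rw [h]
  push_cast
  simp

lemma intCast_n_eq_one (n : ℕ) (hn : 2 ≤ n) : ((n : ℤ) : ZMod (n-1)) = 1 := by
  rw [Int.cast_natCast]
  exact natCast_sub_one_eq_one n hn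

open Classical in
/-- numerator of an n-adic rational, mod n-1 -/
noncomputable def nu (n : ℕ) (x : ℝ) : ZMod (n-1) :=
  if h : IsNAdic n x then ((h.choose : ℤ) : ZMod (n-1)) else 0

lemma nu_welldef (n : ℕ) (hn : 2 ≤ n) {a b : ℤ} {k j : ℕ}
    (h : (a : ℝ) / (n:ℝ) ^ k = (b : ℝ) / (n:ℝ) ^ j) :
    ((a : ZMod (n-1)) = (b : ZMod (n-1))) := by
  have hn0 : (n : ℝ) ≠ 0 := Nat.cast_ne_zero.mpr (by omega)
  rw [div_eq_div_iff (by positivity) (by positivity)] at h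
  have hz : a * (n:ℤ) ^ j = b * (n:ℤ) ^ k := by exact_mod_cast h
  have := congrArg (fun z : ℤ => (z : ZMod (n-1))) hz
  push_cast [intCast_n_eq_one n hn, natCast_sub_one_eq_one n hn] at this
  simpa using this

lemma nu_spec (n : ℕ) (hn : 2 ≤ n) {x : ℝ} (a : ℤ) (k : ℕ)
    (hx : x = (a : ℝ) / (n:ℝ) ^ k) : nu n x = (a : ZMod (n-1)) := by
  have hN : IsNAdic n x := ⟨a, k, hx⟩
  unfold nu
  rw [dif_pos hN]
  obtain ⟨k', hk'⟩ := hN.choose_spec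
  exact nu_welldef n hn (by rw [← hk', ← hx])

lemma isNAdic_int (n : ℕ) (j : ℤ) : IsNAdic n (j : ℝ) := ⟨j, 0, by simp⟩

lemma nu_int (n : ℕ) (hn : 2 ≤ n) (j : ℤ) : nu n (j : ℝ) = (j : ZMod (n-1)) :=
  nu_spec n hn j 0 (by simp)

lemma isNAdic_add (n : ℕ) (hn : 2 ≤ n) {x y : ℝ} (hx : IsNAdic n x) (hy : IsNAdic n y) :
    IsNAdic n (x + y) := by
  obtain ⟨a, k, rfl⟩ := hx
  obtain ⟨b, j, rfl⟩ := hy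
  have hn0 : (n : ℝ) ≠ 0 := Nat.cast_ne_zero.mpr (by omega)
  refine ⟨a * (n:ℤ) ^ j + b * (n:ℤ) ^ k, k + j, ?_⟩
  push_cast
  rw [pow_add]
  field_simp

lemma nu_add (n : ℕ) (hn : 2 ≤ n) {x y : ℝ} (hx : IsNAdic n x) (hy : IsNAdic n y) :
    nu n (x + y) = nu n x + nu n y := by
  obtain ⟨a, k, rfl⟩ := hx
  obtain ⟨b, j, rfl⟩ := hy
  have hn0 : (n : ℝ) ≠ 0 := Nat.cast_ne_zero.mpr (by omega)
  have key : (a:ℝ)/(n:ℝ)^k + (b:ℝ)/(n:ℝ)^j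
      = ((a * (n:ℤ) ^ j + b * (n:ℤ) ^ k : ℤ) : ℝ) / (n:ℝ) ^ (k + j) := by
    push_cast
    rw [pow_add]
    field_simp
  rw [nu_spec n hn _ _ key, nu_spec n hn a k rfl, nu_spec n hn b j rfl]
  push_cast [intCast_n_eq_one n hn, natCast_sub_one_eq_one n hn]
  ring

lemma isNAdic_neg (n : ℕ) {x : ℝ} (hx : IsNAdic n x) : IsNAdic n (-x) := by
  obtain ⟨a, k, rfl⟩ := hx
  exact ⟨-a, k, by push_cast; ring⟩

lemma nu_neg (n : ℕ) (hn : 2 ≤ n) {x : ℝ} (hx : IsNAdic n x) : nu n (-x) = - nu n x := by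
  obtain ⟨a, k, rfl⟩ := hx
  have key : -((a:ℝ)/(n:ℝ)^k) = ((-a : ℤ) : ℝ) / (n:ℝ)^k := by push_cast; ring
  rw [nu_spec n hn _ _ key, nu_spec n hn a k rfl]
  push_cast
  ring

lemma isNAdic_sub (n : ℕ) (hn : 2 ≤ n) {x y : ℝ} (hx : IsNAdic n x) (hy : IsNAdic n y) :
    IsNAdic n (x - y) := by
  rw [sub_eq_add_neg]; exact isNAdic_add n hn hx (isNAdic_neg n hy)

lemma nu_sub (n : ℕ) (hn : 2 ≤ n) {x y : ℝ} (hx : IsNAdic n x) (hy : IsNAdic n y) :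
    nu n (x - y) = nu n x - nu n y := by
  rw [sub_eq_add_neg, nu_add n hn hx (isNAdic_neg n hy), nu_neg n hn hy, sub_eq_add_neg]

lemma nu_zpow_mul (n : ℕ) (hn : 2 ≤ n) (s : ℤ) {x : ℝ} (hx : IsNAdic n x) :
    IsNAdic n ((n:ℝ) ^ s * x) ∧ nu n ((n:ℝ) ^ s * x) = nu n x := by
  obtain ⟨a, k, rfl⟩ := hx
  have hn0 : (n : ℝ) ≠ 0 := Nat.cast_ne_zero.mpr (by omega)
  rcases le_or_gt 0 s with hs | hs
  · obtain ⟨t, rfl⟩ := Int.eq_ofNat_of_zero_le hs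
    have key : (n:ℝ) ^ (t : ℤ) * ((a:ℝ)/(n:ℝ)^k) = ((a * (n:ℤ)^t : ℤ) : ℝ) / (n:ℝ)^k := by
      rw [zpow_natCast]
      push_cast
      field_simp
    refine ⟨⟨_, _, key⟩, ?_⟩
    rw [nu_spec n hn _ _ key, nu_spec n hn a k rfl]
    push_cast [intCast_n_eq_one n hn, natCast_sub_one_eq_one n hn]
    ring
  · set t : ℕ := s.natAbs with ht
    have hst : s = -(t : ℤ) := by omega
    have key : (n:ℝ) ^ s * ((a:ℝ)/(n:ℝ)^k) = (a : ℝ) / (n:ℝ)^(k + t) := by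
      rw [hst, zpow_neg, zpow_natCast, pow_add]
      field_simp
    refine ⟨⟨_, _, key⟩, ?_⟩
    rw [nu_spec n hn _ _ key, nu_spec n hn a k rfl]

lemma circle_coe_eq (x y : ℝ) (h : (x : Circle) = (y : Circle)) : ∃ j : ℤ, x = y + j := by
  rw [QuotientAddGroup.eq_iff_sub_mem, AddSubgroup.mem_zmultiples_iff] at h
  obtain ⟨j, hj⟩ := h
  simp only [zsmul_eq_mul, mul_one] at hj
  exact ⟨j, by linarith⟩

lemma circle_coe_add_int (x : ℝ) (j : ℤ) : ((x + j : ℝ) : Circle) = (x : Circle) := by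
  rw [QuotientAddGroup.eq_iff_sub_mem, AddSubgroup.mem_zmultiples_iff]
  exact ⟨j, by simp⟩

lemma lift_add_nat {F : ℝ → ℝ} (hF : ∀ x, F (x + 1) = F x + 1) (k : ℕ) (x : ℝ) :
    F (x + k) = F x + k := by
  induction k with
  | zero => simp
  | succ k ih =>
      have e : x + ((k : ℝ) + 1) = (x + k) + 1 := by ring
      push_cast
      rw [e, hF, ih]
      ring

lemma lift_sub_nat {F : ℝ → ℝ} (hF : ∀ x, F (x + 1) = F x + 1) (k : ℕ) (x : ℝ) :
    F (x - k) = F x - k := by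
  induction k with
  | zero => simp
  | succ k ih =>
      have e : x - ((k : ℝ) + 1) + 1 = x - k := by ring
      have h2 := hF (x - ((k:ℝ) + 1))
      rw [e, ih] at h2
      push_cast
      linarith

lemma lift_add_int {F : ℝ → ℝ} (hF : ∀ x, F (x + 1) = F x + 1) (j : ℤ) (x : ℝ) :
    F (x + j) = F x + j := by
  rcases le_or_gt 0 j with hj | hj
  · obtain ⟨t, rfl⟩ := Int.eq_ofNat_of_zero_le hj
    push_cast
    exact lift_add_nat hF t x
  · set t : ℕ := j.natAbs with ht
    have hjt : j = -(t : ℤ) := by omega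
    rw [hjt]
    push_cast
    have := lift_sub_nat hF t x
    rw [sub_eq_add_neg] at this
    rw [this]
    ring

lemma iterate_add_one {F : ℝ → ℝ} (hF : ∀ x, F (x + 1) = F x + 1) (k : ℕ) (x : ℝ) :
    F^[k] (x + 1) = F^[k] x + 1 := by
  induction k generalizing x with
  | zero => simp
  | succ k ih => rw [Function.iterate_succ_apply, hF, ih, Function.iterate_succ_apply]

lemma isLift_pow {f : Circle ≃ₜ Circle} {F : ℝ → ℝ} (hL : IsLift f F) (k : ℕ) :
    IsLift (f ^ k) (F^[k]) := by
  induction k with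
  | zero => intro x; rfl
  | succ k ih =>
      intro x
      rw [pow_succ]
      have : (f ^ k * f) ((x : ℝ) : Circle) = (f ^ k) (f ((x : ℝ) : Circle)) := rfl
      rw [this, hL x, ih (F x), Function.iterate_succ_apply]

lemma maps_adic (n : ℕ) (hn : 2 ≤ n) {f : Circle ≃ₜ Circle}
    (hIm : f '' nAdicPoints n = nAdicPoints n) {F : ℝ → ℝ} (hL : IsLift f F)
    {x : ℝ} (hx : IsNAdic n x) : IsNAdic n (F x) := by
  have hxp : (x : Circle) ∈ nAdicPoints n := ⟨x, hx, rfl⟩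
  have : f (x : Circle) ∈ nAdicPoints n := by
    rw [← hIm]; exact ⟨_, hxp, rfl⟩
  obtain ⟨y, hy, hfy⟩ := this
  rw [hL x] at hfy
  obtain ⟨j, hj⟩ := circle_coe_eq _ _ hfy
  rw [hj]
  exact isNAdic_add n hn hy (isNAdic_int n j)

lemma nu_zero (n : ℕ) (hn : 2 ≤ n) : nu n (0:ℝ) = 0 := by
  have := nu_spec n hn (x := (0:ℝ)) 0 0 (by simp)
  simpa using this

lemma nu_invariance (n : ℕ) (hn : 2 ≤ n) {f : Circle ≃ₜ Circle}
    (hIm : f '' nAdicPoints n = nAdicPoints n)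
    {F : ℝ → ℝ} (hL : IsLift f F) (hPA : PiecewiseNAffine n F) :
    ∀ x : ℝ, IsNAdic n x → nu n (F x) = nu n x + nu n (F 0) := by
  obtain ⟨hF1, m₀, t, slope, cc, hm₀, ht0, htm, hmono, hadic, haff⟩ := hPA
  have h0 : IsNAdic n (0:ℝ) := ⟨0, 0, by simp⟩
  have piece : ∀ i, i < m₀ → ∀ u v : ℝ, u ∈ Set.Icc (t i) (t (i+1)) →
      v ∈ Set.Icc (t i) (t (i+1)) → IsNAdic n u → IsNAdic n v →
      nu n (F v) = nu n (F u) + nu n v - nu n u := by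
    intro i hi u v hu hv hau hav
    have h1 := haff i hi u hu
    have h2 := haff i hi v hv
    have hdiff : F v - F u = (n:ℝ)^(slope i) * (v - u) := by rw [h1, h2]; ring
    have hvu : IsNAdic n (v - u) := isNAdic_sub n hn hav hau
    have hz := nu_zpow_mul n hn (slope i) hvu
    have hFu : IsNAdic n (F u) := maps_adic n hn hIm hL hau
    have hFv : IsNAdic n (F v) := maps_adic n hn hIm hL hav
    have e1 : nu n (F v - F u) = nu n (F v) - nu n (F u) := nu_sub n hn hFv hFu
    have e2 : nu n (F v - F u) = nu n v - nu n u := by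
      rw [hdiff, hz.2, nu_sub n hn hav hau]
    linear_combination e2 - e1
  have bp : ∀ i, i ≤ m₀ → nu n (F (t i)) = nu n (t i) + nu n (F 0) := by
    intro i
    induction i with
    | zero => intro _; rw [ht0, nu_zero n hn]; ring
    | succ i ih =>
        intro hi
        have hi' : i < m₀ := by omega
        have h := piece i hi' (t i) (t (i+1)) ⟨le_refl _, (hmono i hi').le⟩
          ⟨(hmono i hi').le, le_refl _⟩ (hadic i (by omega)) (hadic (i+1) hi)
        rw [h, ih (by omega)]
        ring
  have main01 : ∀ x : ℝ, 0 ≤ x → x ≤ 1 → IsNAdic n x →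
      nu n (F x) = nu n x + nu n (F 0) := by
    intro x hx0 hx1 hax
    classical
    set P : ℕ → Prop := fun i => t i ≤ x with hP
    have hP0 : P 0 := by rw [hP]; simpa [ht0] using hx0
    set i := Nat.findGreatest P m₀ with hidef
    have hPi : P i := Nat.findGreatest_spec (Nat.zero_le m₀) hP0
    have him : i ≤ m₀ := Nat.findGreatest_le m₀
    rcases eq_or_lt_of_le him with heq | hlt
    · have hx : x = t i := by
        apply le_antisymm
        · rw [heq, htm]; exact hx1
        · exact hPi
      rw [hx]
      exact bp i him
    · have hxlt : x < t (i+1) := by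
        by_contra hcon
        push_neg at hcon
        exact Nat.findGreatest_is_greatest (Nat.lt_succ_self i) (by omega) hcon
      have h := piece i hlt (t i) x ⟨le_refl _, (hmono i hlt).le⟩
        ⟨hPi, hxlt.le⟩ (hadic i (by omega)) hax
      rw [h, bp i him]
      ring
  intro x hax
  set j := ⌊x⌋ with hj
  set y := x - (j:ℝ) with hy
  have hy0 : 0 ≤ y := by rw [hy, hj]; linarith [Int.floor_le x]
  have hy1 : y ≤ 1 := by rw [hy, hj]; linarith [Int.lt_floor_add_one x]
  have hay : IsNAdic n y := isNAdic_sub n hn hax (isNAdic_int n j)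
  have hxyj : x = y + (j:ℝ) := by rw [hy]; ring
  have hFx : F x = F y + (j:ℝ) := by
    rw [hxyj]; exact lift_add_int hF1 j y
  rw [hFx, nu_add n hn (maps_adic n hn hIm hL hay) (isNAdic_int n j), nu_int n hn j,
    main01 y hy0 hy1 hay, hxyj, nu_add n hn hay (isNAdic_int n j), nu_int n hn j]
  ring

lemma lift_of_id (G : ℝ → ℝ) (hM : StrictMono G) (hG1 : ∀ x, G (x+1) = G x + 1)
    (hint : ∀ x : ℝ, ∃ z : ℤ, G x = x + z) : ∃ d : ℤ, ∀ x, G x = x + d := by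
  obtain ⟨d, hd⟩ := hint 0
  refine ⟨d, ?_⟩
  have mono_h : ∀ (x y : ℝ) (zx zy : ℤ), G x = x + zx → G y = y + zy →
      x < y → y ≤ x + 1 → zx ≤ zy := by
    intro x y zx zy hx hy hxy hyx
    by_contra hcon
    push_neg at hcon
    have hzz : (zy:ℝ) + 1 ≤ zx := by exact_mod_cast hcon
    have h1 : G y ≤ G x := by rw [hx, hy]; linarith
    exact absurd (hM hxy) (not_lt.mpr h1)
  have key01 : ∀ x : ℝ, 0 < x → x < 1 → G x = x + d := by
    intro x h0 h1
    obtain ⟨z, hz⟩ := hint x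
    have hG1' : G 1 = 1 + (d:ℝ) := by
      have := hG1 0
      rw [hd] at this
      rw [show (1:ℝ) = 0 + 1 from by ring, this]
      ring
    have l1 : d ≤ z := mono_h 0 x d z (by simpa using hd) hz h0 (by linarith)
    have l2 : z ≤ d := mono_h x 1 z d hz hG1' h1 (by linarith)
    rw [hz]
    have : z = d := le_antisymm l2 l1
    rw [this]
  intro x
  set j := ⌊x⌋ with hj
  set y := x - (j:ℝ) with hy
  have hxy : x = y + (j:ℝ) := by rw [hy]; ring
  have hGx : G x = G y + (j:ℝ) := by rw [hxy]; exact lift_add_int hG1 j y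
  have hy0 : 0 ≤ y := by rw [hy, hj]; linarith [Int.floor_le x]
  have hy1 : y < 1 := by rw [hy, hj]; linarith [Int.lt_floor_add_one x]
  rcases eq_or_lt_of_le hy0 with h0 | h0
  · rw [hGx, ← h0, hd, hxy, ← h0]; ring
  · rw [hGx, key01 y h0 hy1, hxy]; ring

lemma strictMono_iterate_id (K : ℝ → ℝ) (hM : StrictMono K) (p : ℕ) (hp : 0 < p)
    (h : ∀ x, K^[p] x = x) : ∀ x, K x = x := by
  intro x
  rcases lt_trichotomy (K x) x with hlt | heq | hgt
  · have step : ∀ j : ℕ, K^[j+1] x < K^[j] x := by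
      intro j
      rw [Function.iterate_succ_apply]
      exact (hM.iterate j) hlt
    have anti : StrictAnti (fun j : ℕ => K^[j] x) := strictAnti_nat_of_succ_lt step
    have := anti hp
    simp only [Function.iterate_zero_apply] at this
    rw [h x] at this
    exact absurd this (lt_irrefl x)
  · exact heq
  · have step : ∀ j : ℕ, K^[j] x < K^[j+1] x := by
      intro j
      rw [Function.iterate_succ_apply]
      exact (hM.iterate j) hgt
    have mono : StrictMono (fun j : ℕ => K^[j] x) := strictMono_nat_of_lt_succ step
    have := mono hp
    simp only [Function.iterate_zero_apply] at this
    rw [h x] at this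
    exact absurd this (lt_irrefl x)

lemma nu_iterate (n : ℕ) (hn : 2 ≤ n) {f : Circle ≃ₜ Circle}
    (hIm : f '' nAdicPoints n = nAdicPoints n)
    {F : ℝ → ℝ} (hL : IsLift f F) (hPA : PiecewiseNAffine n F) (j : ℕ) :
    IsNAdic n (F^[j] (0:ℝ)) ∧ nu n (F^[j] (0:ℝ)) = (j : ZMod (n-1)) * nu n (F 0) := by
  induction j with
  | zero => exact ⟨⟨0, 0, by simp⟩, by simp [nu_zero n hn]⟩
  | succ j ih =>
      have hadic : IsNAdic n (F^[j+1] (0:ℝ)) := by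
        rw [Function.iterate_succ_apply']
        exact maps_adic n hn hIm hL ih.1
      refine ⟨hadic, ?_⟩
      rw [Function.iterate_succ_apply', nu_invariance n hn hIm hL hPA _ ih.1, ih.2]
      push_cast
      ring

/-- Let `n ≥ 2`.  If `f ∈ T_n` has finite order `m`, then there exists
a nonnegative integer `l` such that `m` divides `l(n-1)+1`. -/
theorem order_of_torsion_divides (n : ℕ) (hn : 2 ≤ n)
    (f : Circle ≃ₜ Circle) (hf : f ∈ TnSet n) (hfin : IsOfFinOrder f)
    (m : ℕ) (hm : orderOf f = m) :
    ∃ l : ℕ, m ∣ l * (n - 1) + 1 := by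
  obtain ⟨hIm, F, hM, hL, hPA⟩ := hf
  have hm0 : 0 < m := hm ▸ hfin.orderOf_pos
  have hF1 : ∀ x, F (x + 1) = F x + 1 := hPA.1
  have hfm : f ^ m = 1 := hm ▸ pow_orderOf_eq_one f
  have hLm : IsLift (f ^ m) (F^[m]) := isLift_pow hL m
  have hint : ∀ x : ℝ, ∃ z : ℤ, F^[m] x = x + z := by
    intro x
    have h := hLm x
    rw [hfm] at h
    have h1 : (1 : Circle ≃ₜ Circle) ((x : ℝ) : Circle) = ((x : ℝ) : Circle) := rfl
    rw [h1] at h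
    exact circle_coe_eq _ _ h.symm
  obtain ⟨d, hd⟩ := lift_of_id (F^[m]) (hM.iterate m) (iterate_add_one hF1 m) hint
  set c := nu n (F 0) with hc
  have hdm : ((d : ℤ) : ZMod (n-1)) = (m : ZMod (n-1)) * c := by
    have h := (nu_iterate n hn hIm hL hPA m).2
    rw [hd 0, zero_add, nu_int n hn d] at h
    exact h
  -- no prime divides both m and d
  have hgcd : ∀ p : ℕ, p.Prime → p ∣ m → ¬ ((p : ℤ) ∣ d) := by
    intro p hp hpm hpd
    obtain ⟨e, he⟩ := hpd
    set k := m / p with hk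
    have hkm : k * p = m := Nat.div_mul_cancel hpm
    have hkpos : 0 < k := Nat.div_pos (Nat.le_of_dvd hm0 hpm) hp.pos
    have hG'1 : ∀ x, F^[k] (x + 1) = F^[k] x + 1 := iterate_add_one hF1 k
    have hG'M : StrictMono (F^[k]) := hM.iterate k
    set K : ℝ → ℝ := fun x => F^[k] x - (e : ℝ) with hK
    have hKM : StrictMono K := fun a b hab => sub_lt_sub_right (hG'M hab) _
    have hKit : ∀ (j : ℕ) (x : ℝ), K^[j] x = F^[k * j] x - j * (e : ℝ) := by
      intro j
      induction j with
      | zero => intro x; simp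
      | succ j ih =>
          intro x
          rw [Function.iterate_succ_apply', ih x, hK]
          simp only
          have h1 : F^[k] (F^[k * j] x - (j : ℝ) * e) = F^[k] (F^[k * j] x) + (-(j * e) : ℤ) := by
            have := lift_add_int hG'1 (-(j * e)) (F^[k * j] x)
            rw [← this]
            congr 1
            push_cast
            ring
          rw [h1, ← Function.iterate_add_apply]
          have hkj : k + k * j = k * (j + 1) := by ring
          rw [hkj]
          push_cast
          ring
    have hKp : ∀ x, K^[p] x = x := by
      intro x
      rw [hKit p x, hkm, hd x]
      have : (d : ℝ) = p * e := by exact_mod_cast congrArg (fun z : ℤ => (z : ℝ)) he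
      rw [this]
      ring
    have hKid := strictMono_iterate_id K hKM p hp.pos hKp
    have hG'e : ∀ x, F^[k] x = x + (e : ℝ) := by
      intro x
      have := hKid x
      rw [hK] at this
      simp only at this
      linarith [this]
    have hLk : IsLift (f ^ k) (F^[k]) := isLift_pow hL k
    have hfk : f ^ k = 1 := by
      apply Homeomorph.ext
      intro q
      induction q using QuotientAddGroup.induction_on with
      | H x =>
          have h1 : ((x : ℝ) : Circle) = ((x : ℝ) : Circle) := rfl
          have h2 := hLk x
          rw [hG'e x] at h2
          have h3 : ((x + (e : ℝ) : ℝ) : Circle) = ((x : ℝ) : Circle) := circle_coe_add_int x e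
          rw [h3] at h2
          exact h2.trans rfl
    have hdvd : m ∣ k := hm ▸ orderOf_dvd_of_pow_eq_one hfk
    have := Nat.le_of_dvd hkpos hdvd
    have hp2 := hp.two_le
    have h2k : k * 2 ≤ k * p := Nat.mul_le_mul_left k hp2
    omega
  -- m is coprime to n - 1
  have hcop : Nat.Coprime m (n - 1) := by
    by_contra hc
    have hg1 : Nat.gcd m (n - 1) ≠ 1 := hc
    have hgpos : 0 < Nat.gcd m (n - 1) := Nat.gcd_pos_of_pos_left _ hm0
    have hg2 : 2 ≤ Nat.gcd m (n - 1) := by omega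
    set p := (Nat.gcd m (n - 1)).minFac with hp
    have hpp : p.Prime := Nat.minFac_prime (by omega)
    have hpg : p ∣ Nat.gcd m (n - 1) := Nat.minFac_dvd _
    have hpm : p ∣ m := hpg.trans (Nat.gcd_dvd_left _ _)
    have hpq : p ∣ (n - 1) := hpg.trans (Nat.gcd_dvd_right _ _)
    -- cast hdm to ZMod p
    have hcast := congrArg (ZMod.castHom hpq (ZMod p)) hdm
    rw [map_intCast, map_mul, map_natCast] at hcast
    have hmp : ((m : ℕ) : ZMod p) = 0 := (ZMod.natCast_eq_zero_iff m p).mpr hpm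
    rw [hmp, zero_mul] at hcast
    have : (p : ℤ) ∣ d := (ZMod.intCast_zmod_eq_zero_iff_dvd d p).mp hcast
    exact hgcd p hpp hpm this
  -- produce l
  rcases eq_or_lt_of_le (Nat.succ_le_of_lt hm0) with h1 | h1
  · exact ⟨0, by rw [← h1]; exact one_dvd _⟩
  haveI : NeZero m := ⟨by omega⟩
  set u := ZMod.unitOfCoprime (n - 1) hcop.symm with hu
  set l := (-(u⁻¹ : (ZMod m)ˣ) : ZMod m).val with hl
  refine ⟨l, ?_⟩
  rw [← ZMod.natCast_eq_zero_iff]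
  push_cast
  rw [hl, ZMod.natCast_val, ZMod.cast_id]
  have hn1 : ((n - 1 : ℕ) : ZMod m) = (u : ZMod m) := (ZMod.coe_unitOfCoprime _ _).symm
  rw [hn1, neg_mul, Units.inv_mul]
  ring
end ThompsonPaper
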